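/- Let a, v, b ∈ [0,1]^N with a ≼ v ≼ b componentwise, and suppose v_i > 0 for all i. Let θ_a, θ_v, θ_b be the optimal expected rewards under preference vectors a, v, b respectively, and let S_v = Top([N], v, θ_v) be the best assortment. Then for every item i ∈ S_v there exists θ ∈ [θ_a, θ_b] such that i ∈ Top([N], g^{(i)}, θ), where g^{(i)} agrees with a on all coordinates except that its i-th coordinate equals b_i. (Hence the Prune subroutine outputs a set C with S_v ⊆ C.) -/

import Mathlib

/-- The expected reward `R(S, v)` of an assortment `S`. -/
noncomputable def Rew {N : ℕ} (r v : Fin N → ℝ) (S : Finset (Fin N)) : ℝ :=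
  (∑ i ∈ S, r i * v i) / (1 + ∑ i ∈ S, v i)

/-- `θ_v`: the optimal expected reward over assortments of size at most `K`. -/
noncomputable def thetaOpt (N K : ℕ) (r v : Fin N → ℝ) : ℝ :=
  ((Finset.univ : Finset (Fin N)).powerset.filter (fun S => S.card ≤ K)).sup'
    ⟨∅, by simp⟩ (Rew r v)

/- `Top([N], w, θ)`: take the `min {K, N}` items `i` with the largest values
`(r i − θ) * w i` (ties broken in favor of smaller index), then remove all items
with `r i − θ ≤ 0`. -/
open Classical in
noncomputable def TopSet (N K : ℕ) (r w : Fin N → ℝ) (θ : ℝ) : Finset (Fin N) :=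
  ((List.insertionSort (fun i j =>
      (r j - θ) * w j < (r i - θ) * w i ∨
      ((r i - θ) * w i = (r j - θ) * w j ∧ i ≤ j)) (List.finRange N)).take
    (min K N)).toFinset.filter (fun i => θ < r i)

/-- membership in a Finset filter-powerset set -/
lemma mem_theta_dom {N K : ℕ} (S : Finset (Fin N)) (hS : S.card ≤ K) :
    S ∈ (Finset.univ : Finset (Fin N)).powerset.filter (fun S => S.card ≤ K) := by
  simp [Finset.mem_filter, Finset.mem_powerset, hS]

lemma Rew_le_thetaOpt (N K : ℕ) (r v : Fin N → ℝ) (S : Finset (Fin N))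
    (hS : S.card ≤ K) : Rew r v S ≤ thetaOpt N K r v :=
  Finset.le_sup' (Rew r v) (mem_theta_dom S hS)

lemma theta_mono (N K : ℕ) (r u w : Fin N → ℝ) (hu : ∀ j, 0 ≤ u j)
    (huw : ∀ j, u j ≤ w j) :
    thetaOpt N K r u ≤ thetaOpt N K r w := by
  apply Finset.sup'_le
  intro S hS
  rw [Finset.mem_filter] at hS
  set θ := thetaOpt N K r w with hθ
  by_contra hcon
  push_neg at hcon
  have hw : ∀ j, 0 ≤ w j := fun j => le_trans (hu j) (huw j)
  have hsumu : (0:ℝ) ≤ ∑ j ∈ S, u j := Finset.sum_nonneg (fun j _ => hu j)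
  have hdenu : (0:ℝ) < 1 + ∑ j ∈ S, u j := by linarith
  have h1 : θ * (1 + ∑ j ∈ S, u j) < ∑ j ∈ S, r j * u j := by
    rw [Rew, lt_div_iff₀ hdenu] at hcon
    exact hcon
  have h2 : θ < ∑ j ∈ S, (r j - θ) * u j := by
    have : ∑ j ∈ S, (r j - θ) * u j
        = (∑ j ∈ S, r j * u j) - θ * ∑ j ∈ S, u j := by
      rw [Finset.mul_sum, ← Finset.sum_sub_distrib]
      congr 1; ext j; ring
    rw [this]; linarith
  set T := S.filter (fun j => θ < r j) with hT
  have h3 : ∑ j ∈ S, (r j - θ) * u j ≤ ∑ j ∈ T, (r j - θ) * u j := by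
    rw [← Finset.sum_filter_add_sum_filter_not S (fun j => θ < r j)]
    have : ∑ j ∈ S.filter (fun j => ¬ θ < r j), (r j - θ) * u j ≤ 0 := by
      apply Finset.sum_nonpos
      intro j hj
      rw [Finset.mem_filter] at hj
      have : r j - θ ≤ 0 := by push_neg at hj; linarith [hj.2]
      exact mul_nonpos_of_nonpos_of_nonneg this (hu j)
    rw [hT]; linarith
  have h4 : ∑ j ∈ T, (r j - θ) * u j ≤ ∑ j ∈ T, (r j - θ) * w j := by
    apply Finset.sum_le_sum
    intro j hj
    rw [hT, Finset.mem_filter] at hj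
    have : 0 ≤ r j - θ := by linarith [hj.2]
    exact mul_le_mul_of_nonneg_left (huw j) this
  have hsumw : (0:ℝ) ≤ ∑ j ∈ T, w j := Finset.sum_nonneg (fun j _ => hw j)
  have hdenw : (0:ℝ) < 1 + ∑ j ∈ T, w j := by linarith
  have h5 : θ < Rew r w T := by
    rw [Rew, lt_div_iff₀ hdenw]
    have : ∑ j ∈ T, (r j - θ) * w j
        = (∑ j ∈ T, r j * w j) - θ * ∑ j ∈ T, w j := by
      rw [Finset.mul_sum, ← Finset.sum_sub_distrib]
      congr 1; ext j; ring
    nlinarith [h2, h3, h4]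
  have h6 : Rew r w T ≤ θ :=
    Rew_le_thetaOpt N K r w T (le_trans (Finset.card_filter_le S _) hS.2)
  linarith

section OrderLemmas

variable {α : Type*} [LinearOrder α] (f : α → ℝ)

lemma vrel_total : ∀ x y : α,
    (f y < f x ∨ (f x = f y ∧ x ≤ y)) ∨ (f x < f y ∨ (f y = f x ∧ y ≤ x)) := by
  intro x y
  rcases lt_trichotomy (f x) (f y) with h | h | h
  · right; left; exact h
  · rcases le_total x y with hxy | hxy
    · left; right; exact ⟨h, hxy⟩
    · right; right; exact ⟨h.symm, hxy⟩
  · left; left; exact h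

lemma vrel_trans : ∀ x y z : α,
    (f y < f x ∨ (f x = f y ∧ x ≤ y)) →
    (f z < f y ∨ (f y = f z ∧ y ≤ z)) →
    (f z < f x ∨ (f x = f z ∧ x ≤ z)) := by
  intro x y z h1 h2
  rcases h1 with h1 | ⟨h1, h1'⟩ <;> rcases h2 with h2 | ⟨h2, h2'⟩
  · left; linarith
  · left; linarith
  · left; linarith
  · right; exact ⟨h1.trans h2, h1'.trans h2'⟩

lemma vrel_antisymm : ∀ x y : α,
    (f y < f x ∨ (f x = f y ∧ x ≤ y)) →
    (f x < f y ∨ (f y = f x ∧ y ≤ x)) →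
    x = y := by
  intro x y h1 h2
  rcases h1 with h1 | ⟨h1, h1'⟩ <;> rcases h2 with h2 | ⟨h2, h2'⟩
  · exact absurd h2 (not_lt.mpr h1.le)
  · exact absurd h1 (by rw [h2]; exact lt_irrefl _)
  · exact absurd h2 (by rw [h1]; exact lt_irrefl _)
  · exact le_antisymm h1' h2'

end OrderLemmas

lemma mem_take_iff_countP {α : Type*} (rel : α → α → Prop) [DecidableRel rel]
    (htot : ∀ x y, rel x y ∨ rel y x)
    (hanti : ∀ x y, rel x y → rel y x → x = y) :
    ∀ (L : List α), L.Nodup → L.Pairwise rel → ∀ (i : α), i ∈ L → ∀ m : ℕ,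
      (i ∈ L.take m ↔ L.countP (fun j => decide (rel j i)) ≤ m) := by
  intro L
  induction L with
  | nil => intro _ _ i hi; exact absurd hi List.not_mem_nil
  | cons x T ih =>
    intro hnd hs i hiL m
    rw [List.pairwise_cons] at hs
    obtain ⟨hx, hsT⟩ := hs
    rw [List.nodup_cons] at hnd
    obtain ⟨hxT, hndT⟩ := hnd
    rw [List.countP_cons]
    rcases List.mem_cons.mp hiL with rfl | hiT
    · have h0 : T.countP (fun j => decide (rel j i)) = 0 := by
        rw [List.countP_eq_zero]
        intro j hj
        simp only [decide_eq_true_eq]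
        intro hji
        exact hxT ((hanti j i hji (hx j hj)) ▸ hj)
      have hii : rel i i := (htot i i).elim id id
      rw [h0, decide_eq_true hii, if_pos rfl]
      cases m with
      | zero => simp
      | succ n =>
        simp [List.take_succ_cons]
    · have hxi : rel x i := hx i hiT
      have hxne : x ≠ i := fun h => hxT (h ▸ hiT)
      rw [decide_eq_true hxi, if_pos rfl]
      cases m with
      | zero =>
        simp only [List.take_zero, List.not_mem_nil, false_iff]
        omega
      | succ n =>
        rw [List.take_succ_cons, List.mem_cons, ih hndT hsT i hiT n]
        constructor
        · rintro (rfl | h)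
          · exact absurd rfl hxne
          · omega
        · intro h
          right
          omega

open Classical in
theorem stmt10 (N K : ℕ) (hK : 1 ≤ K) (hKN : K ≤ N) (r a v b : Fin N → ℝ)
    (hr : ∀ j, 0 < r j ∧ r j ≤ 1)
    (ha : ∀ j, 0 ≤ a j ∧ a j ≤ 1) (hv : ∀ j, 0 < v j ∧ v j ≤ 1)
    (hb : ∀ j, 0 ≤ b j ∧ b j ≤ 1)
    (hav : ∀ j, a j ≤ v j) (hvb : ∀ j, v j ≤ b j)
    (i : Fin N) (hi : i ∈ TopSet N K r v (thetaOpt N K r v)) :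
    ∃ θ, thetaOpt N K r a ≤ θ ∧ θ ≤ thetaOpt N K r b ∧
      i ∈ TopSet N K r (Function.update a i (b i)) θ := by
  set θ := thetaOpt N K r v with hθdef
  have hθa : thetaOpt N K r a ≤ θ :=
    theta_mono N K r a v (fun j => (ha j).1) hav
  have hθb : θ ≤ thetaOpt N K r b :=
    theta_mono N K r v b (fun j => le_of_lt (hv j).1) hvb
  refine ⟨θ, hθa, hθb, ?_⟩
  set g := Function.update a i (b i) with hg
  -- unpack hypothesis
  rw [TopSet, Finset.mem_filter, List.mem_toFinset] at hi
  obtain ⟨himem, hθi⟩ := hi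
  rw [TopSet, Finset.mem_filter, List.mem_toFinset]
  refine ⟨?_, hθi⟩
  -- set up relations
  set fv : Fin N → ℝ := fun j => (r j - θ) * v j with hfv
  set fg : Fin N → ℝ := fun j => (r j - θ) * g j with hfg
  set relv : Fin N → Fin N → Prop :=
    fun x y => (r y - θ) * v y < (r x - θ) * v x ∨
      ((r x - θ) * v x = (r y - θ) * v y ∧ x ≤ y) with hrelv
  set relg : Fin N → Fin N → Prop :=
    fun x y => (r y - θ) * g y < (r x - θ) * g x ∨
      ((r x - θ) * g x = (r y - θ) * g y ∧ x ≤ y) with hrelg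
  have hvtot : ∀ x y, relv x y ∨ relv y x := vrel_total fv
  have hvanti : ∀ x y, relv x y → relv y x → x = y := vrel_antisymm fv
  have hgtot : ∀ x y, relg x y ∨ relg y x := vrel_total fg
  have hganti : ∀ x y, relg x y → relg y x → x = y := vrel_antisymm fg
  haveI : IsTotal (Fin N) relv := ⟨hvtot⟩
  haveI : IsTrans (Fin N) relv := ⟨vrel_trans fv⟩
  haveI : IsTotal (Fin N) relg := ⟨hgtot⟩
  haveI : IsTrans (Fin N) relg := ⟨vrel_trans fg⟩
  set Lv := List.insertionSort relv (List.finRange N) with hLv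
  set Lg := List.insertionSort relg (List.finRange N) with hLg
  have hpv : List.Perm Lv (List.finRange N) := List.perm_insertionSort relv _
  have hpg : List.Perm Lg (List.finRange N) := List.perm_insertionSort relg _
  have hndv : Lv.Nodup := hpv.nodup_iff.mpr (List.nodup_finRange N)
  have hndg : Lg.Nodup := hpg.nodup_iff.mpr (List.nodup_finRange N)
  have hsv : Lv.Pairwise relv := List.pairwise_insertionSort relv _
  have hsg : Lg.Pairwise relg := List.pairwise_insertionSort relg _
  have hiLv : i ∈ Lv := hpv.mem_iff.mpr (List.mem_finRange i)
  have hiLg : i ∈ Lg := hpg.mem_iff.mpr (List.mem_finRange i)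
  set m := min K N with hm
  -- from hypothesis: count for v is at most m
  have hcv : Lv.countP (fun j => decide (relv j i)) ≤ m :=
    (mem_take_iff_countP relv hvtot hvanti Lv hndv hsv i hiLv m).mp himem
  -- key pointwise implication
  have hkey : ∀ j : Fin N, relg j i → relv j i := by
    intro j hj
    by_cases hji : j = i
    · subst hji
      right; exact ⟨rfl, le_refl j⟩
    · have hgj : g j = a j := Function.update_of_ne hji _ _
      have hgi : g i = b i := Function.update_self _ _ _
      have hriθ : 0 < r i - θ := by linarith [hθi]
      have hfvi_pos : 0 < (r i - θ) * v i := mul_pos hriθ (hv i).1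
      have hfgi_ge : (r i - θ) * v i ≤ (r i - θ) * g i := by
        rw [hgi]; exact mul_le_mul_of_nonneg_left (hvb i) hriθ.le
      have hfgj_ge_fgi : (r i - θ) * g i ≤ (r j - θ) * g j := by
        rcases hj with h | ⟨h, _⟩
        · exact h.le
        · exact h.ge
      have hfgj_pos : 0 < (r j - θ) * g j := lt_of_lt_of_le (lt_of_lt_of_le hfvi_pos hfgi_ge) hfgj_ge_fgi
      have hrjθ : 0 < r j - θ := by
        by_contra hcon
        push_neg at hcon
        have : (r j - θ) * g j ≤ 0 := by
          rw [hgj]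
          exact mul_nonpos_of_nonpos_of_nonneg hcon (ha j).1
        linarith
      have hfvj_ge : (r j - θ) * g j ≤ (r j - θ) * v j := by
        rw [hgj]
        exact mul_le_mul_of_nonneg_left (hav j) hrjθ.le
      rcases hj with h | ⟨h, hle⟩
      · left
        calc (r i - θ) * v i ≤ (r i - θ) * g i := hfgi_ge
          _ < (r j - θ) * g j := h
          _ ≤ (r j - θ) * v j := hfvj_ge
      · have hge : (r i - θ) * v i ≤ (r j - θ) * v j := by
          calc (r i - θ) * v i ≤ (r i - θ) * g i := hfgi_ge
            _ = (r j - θ) * g j := h.symm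
            _ ≤ (r j - θ) * v j := hfvj_ge
        rcases lt_or_eq_of_le hge with h' | h'
        · left; exact h'
        · right; exact ⟨h'.symm, hle⟩
  -- count for g is at most count for v
  have hcg : Lg.countP (fun j => decide (relg j i)) ≤ m := by
    have e1 : Lg.countP (fun j => decide (relg j i))
        = (List.finRange N).countP (fun j => decide (relg j i)) := hpg.countP_eq _
    have e2 : Lv.countP (fun j => decide (relv j i))
        = (List.finRange N).countP (fun j => decide (relv j i)) := hpv.countP_eq _
    have e3 : (List.finRange N).countP (fun j => decide (relg j i))
        ≤ (List.finRange N).countP (fun j => decide (relv j i)) := by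
      apply List.countP_mono_left
      intro j _ hj
      simp only [decide_eq_true_eq] at hj ⊢
      exact hkey j hj
    omega
  exact (mem_take_iff_countP relg hgtot hganti Lg hndg hsg i hiLg m).mpr hcg
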